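/- Let x be an n-dimensional observable on the lexicographic MV-algebra M = Γ(H ⋉ G,(u,0)) and let F_x be its spectral resolution. For every nonempty proper subset J of {1,…,n}, all reals a_j ≤ b_j (j ∈ J), and all fixed reals s_i (i ∉ J), the partial increment ∑_{S ⊆ J} (−1)^{|J|−|S|} F_x(d_S) is ≥ 0, where the j-th coordinate of d_S is b_j if j ∈ S, a_j if j ∈ J∖S, and s_j if j ∉ J. -/

import Mathlib

open Function Set

/-- A partially ordered set is Dedekind σ-complete if every monotone increasing
sequence bounded above has a supremum. -/
def DedekindSigmaComplete (G : Type*) [Preorder G] : Prop :=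
  ∀ f : ℕ → G, Monotone f → BddAbove (Set.range f) → ∃ g, IsLUB (Set.range f) g

section Lexi

variable {H : Type*} [AddCommGroup H] [LinearOrder H] [IsOrderedAddMonoid H]
variable {G : Type*} [AddCommGroup G] [Lattice G] [CovariantClass G G (· + ·) (· ≤ ·)]

/-- `u` is a strong unit of `H`. -/
def IsStrongUnit (u : H) : Prop := ∀ h : H, ∃ n : ℕ, 0 < n ∧ h ≤ n • u

/-- The underlying set of the lexicographic MV-algebra `Γ(H ⋉ G, (u,0))`. -/
def MSet (u : H) : Set (H ×ₗ G) := Set.Icc (toLex ((0 : H), (0 : G))) (toLex (u, (0 : G)))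

/-- `M_h`: the elements of `M` whose first coordinate is `h`. -/
def MLevel (u h : H) : Set (H ×ₗ G) := {z ∈ MSet (G := G) u | (ofLex z).1 = h}

/-- A sequence of elements of `M` is summable if all its finite partial sums lie in `M`. -/
def SummableSeq (u : H) (a : ℕ → H ×ₗ G) : Prop := ∀ F : Finset ℕ, ∑ m ∈ F, a m ∈ MSet u

/-- `x` is an `n`-dimensional observable on `Γ(H ⋉ G, (u,0))`. -/
def IsObservable (u : H) (n : ℕ) (x : Set (Fin n → ℝ) → H ×ₗ G) : Prop :=
  (∀ A : Set (Fin n → ℝ), MeasurableSet A → x A ∈ MSet u) ∧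
  x Set.univ = toLex (u, (0 : G)) ∧
  ∀ A : ℕ → Set (Fin n → ℝ), (∀ m, MeasurableSet (A m)) → Pairwise (Disjoint on A) →
    (∀ F : Finset ℕ, ∑ m ∈ F, x (A m) ∈ MSet u) ∧
    IsLUB {y | ∃ F : Finset ℕ, y = ∑ m ∈ F, x (A m)} (x (⋃ m, A m))

/-- The spectral resolution `F_x` of an observable `x`. -/
def specRes {n : ℕ} (x : Set (Fin n → ℝ) → H ×ₗ G) : (Fin n → ℝ) → H ×ₗ G :=
  fun t => x {s | ∀ i, s i < t i}

/-- The increment `V(F,[a,b))`. -/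
def boxSum {n : ℕ} (F : (Fin n → ℝ) → H ×ₗ G) (a b : Fin n → ℝ) : H ×ₗ G :=
  ∑ S : Finset (Fin n), ((-1 : ℤ) ^ (n - S.card)) • F (fun i => if i ∈ S then b i else a i)

/-- `F` is an `n`-dimensional spectral resolution on `Γ(H ⋉ G, (u,0))`. -/
def IsSpectralResolution (u : H) (n : ℕ) (F : (Fin n → ℝ) → H ×ₗ G) : Prop :=
  Monotone F ∧
  IsLUB (Set.range F) (toLex (u, (0 : G))) ∧
  (∀ t : Fin n → ℝ, IsLUB {y | ∃ s : Fin n → ℝ, (∀ i, s i < t i) ∧ y = F s} (F t)) ∧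
  (∀ (i : Fin n) (s : Fin n → ℝ),
      IsGLB {y | ∃ r : ℝ, y = F (Function.update s i r)} (toLex ((0 : H), (0 : G)))) ∧
  (∀ a b : Fin n → ℝ, a ≤ b →
      toLex ((0 : H), (0 : G)) ≤ boxSum F a b ∧ boxSum F a b ≤ toLex (u, (0 : G)))

/-- `T_h = {s ∈ ℝⁿ : F s ∈ M_h}`. -/
def TSet (u : H) {n : ℕ} (F : (Fin n → ℝ) → H ×ₗ G) (h : H) : Set (Fin n → ℝ) :=
  {s | F s ∈ MLevel u h}

/-- The projection `π_j^h(s)`. -/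
noncomputable def proj (u : H) {n : ℕ} (F : (Fin n → ℝ) → H ×ₗ G) (h : H)
    (s : Fin n → ℝ) (j : Fin n) : ℝ :=
  sInf {r : ℝ | Function.update s j r ∈ TSet u F h}

/-- The characteristic point `π_h(s)` associated to `s ∈ T_h`. -/
noncomputable def charPt (u : H) {n : ℕ} (F : (Fin n → ℝ) → H ×ₗ G) (h : H)
    (s : Fin n → ℝ) : Fin n → ℝ :=
  fun j => proj u F h s j

/-- The set of characteristic points of `T_h`. -/
def charPts (u : H) {n : ℕ} (F : (Fin n → ℝ) → H ×ₗ G) (h : H) : Set (Fin n → ℝ) :=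
  charPt u F h '' TSet u F h

/-- The set of all characteristic points of `F`. -/
def charPoints (u : H) {n : ℕ} (F : (Fin n → ℝ) → H ×ₗ G) : Set (Fin n → ℝ) :=
  {p | ∃ h : H, 0 < h ∧ h ≤ u ∧ p ∈ charPts u F h}

/-- A block of some `T_h`, `0 < h ≤ u`. -/
def IsBlock (u : H) {n : ℕ} (F : (Fin n → ℝ) → H ×ₗ G) (C : Set (Fin n → ℝ)) : Prop :=
  ∃ h : H, 0 < h ∧ h ≤ u ∧ ∃ s ∈ TSet u F h,
    C = {t ∈ TSet u F h | charPt u F h t = charPt u F h s}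

/-- A `T_0`-adjoined block. -/
def IsT0AdjBlock (u : H) {n : ℕ} (F : (Fin n → ℝ) → H ×ₗ G) (C : Set (Fin n → ℝ)) : Prop :=
  ∃ h : H, 0 < h ∧ h ≤ u ∧ (∃ s ∈ TSet u F h,
    C = {t ∈ TSet u F h | charPt u F h t = charPt u F h s}) ∧
    ∀ t ∈ C, ∀ j : Fin n, Function.update t j (proj u F h t j) ∈ TSet u F 0

end Lexi

section AuxLemmas
variable {H : Type*} [AddCommGroup H] [LinearOrder H] [IsOrderedAddMonoid H]
variable {G : Type*} [AddCommGroup G] [Lattice G] [CovariantClass G G (· + ·) (· ≤ ·)]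

instance lexOrderedAddCommGroup : IsOrderedAddMonoid (H ×ₗ G) :=
  { add_le_add_left := by
      rintro p q h c
      rw [add_comm p c, add_comm q c]
      rcases Prod.Lex.le_iff.mp h with h | ⟨h1, h2⟩
      · exact Prod.Lex.le_iff.mpr (Or.inl (add_lt_add_right h _))
      · exact Prod.Lex.le_iff.mpr (Or.inr
          ⟨show (ofLex c).1 + (ofLex p).1 = (ofLex c).1 + (ofLex q).1 from by rw [h1],
           add_le_add_right h2 _⟩) }

lemma lex_zero_eq : (0 : H ×ₗ G) = toLex ((0 : H), (0 : G)) := rfl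

variable {u : H} {n : ℕ} {x : Set (Fin n → ℝ) → H ×ₗ G}

lemma obs_nonneg (hx : IsObservable u n x) {A : Set (Fin n → ℝ)} (hA : MeasurableSet A) :
    (0 : H ×ₗ G) ≤ x A := (hx.1 A hA).1

lemma obs_empty (hx : IsObservable u n x) : x ∅ = 0 := by
  have h := (hx.2.2 (fun _ => (∅ : Set (Fin n → ℝ))) (fun _ => MeasurableSet.empty)
    (fun i j hij => by simp [Function.onFun])).2
  rw [Set.iUnion_empty] at h
  have hle : x ∅ + x ∅ ≤ x ∅ := h.1 ⟨({0, 1} : Finset ℕ), by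
    rw [Finset.sum_pair (by norm_num : (0:ℕ) ≠ 1)]⟩
  have h0 : (0 : H ×ₗ G) ≤ x ∅ := obs_nonneg hx MeasurableSet.empty
  have := add_le_add_right hle (-(x ∅))
  simp only [neg_add_cancel_left, neg_add_cancel] at this
  exact le_antisymm this h0

lemma obs_union (hx : IsObservable u n x) {A B : Set (Fin n → ℝ)}
    (hA : MeasurableSet A) (hB : MeasurableSet B) (hAB : Disjoint A B) :
    x (A ∪ B) = x A + x B := by
  classical
  set C : ℕ → Set (Fin n → ℝ) := fun m => if m = 0 then A else if m = 1 then B else ∅ with hC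
  have hmeas : ∀ m, MeasurableSet (C m) := by
    intro m; dsimp [C]; split_ifs <;> first | exact hA | exact hB | exact MeasurableSet.empty
  have hdisj : Pairwise (Disjoint on C) := by
    intro i j hij
    dsimp [Function.onFun, C]
    split_ifs <;> first
      | exact absurd (by omega : i = j) hij
      | exact hAB
      | exact hAB.symm
      | simp
  have h := (hx.2.2 C hmeas hdisj).2
  have hU : (⋃ m, C m) = A ∪ B := by
    apply Set.Subset.antisymm
    · intro t ht
      rcases Set.mem_iUnion.mp ht with ⟨m, hm⟩
      dsimp [C] at hm
      split_ifs at hm with h1 h2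
      · exact Or.inl hm
      · exact Or.inr hm
      · exact absurd hm (Set.notMem_empty t)
    · rintro t (ht | ht)
      · exact Set.mem_iUnion.mpr ⟨0, by simpa [C] using ht⟩
      · exact Set.mem_iUnion.mpr ⟨1, by simpa [C] using ht⟩
  rw [hU] at h
  refine le_antisymm ?_ ?_
  · apply h.2
    rintro y ⟨F, rfl⟩
    have hsub : F ∩ {0, 1} ⊆ F := Finset.inter_subset_left
    have hstep : ∑ m ∈ F, x (C m) = ∑ m ∈ F ∩ {0, 1}, x (C m) := by
      refine (Finset.sum_subset hsub ?_).symm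
      intro m hm hm'
      have : C m = ∅ := by
        dsimp [C]
        have h0 : m ≠ 0 := by
          rintro rfl; exact hm' (Finset.mem_inter.mpr ⟨hm, by simp⟩)
        have h1 : m ≠ 1 := by
          rintro rfl; exact hm' (Finset.mem_inter.mpr ⟨hm, by simp⟩)
        rw [if_neg h0, if_neg h1]
      rw [this, obs_empty hx]
    rw [hstep]
    calc ∑ m ∈ F ∩ {0, 1}, x (C m)
        ≤ ∑ m ∈ ({0, 1} : Finset ℕ), x (C m) := by
          refine Finset.sum_le_sum_of_subset_of_nonneg Finset.inter_subset_right ?_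
          intro m _ _; exact obs_nonneg hx (hmeas m)
      _ = x A + x B := by
          rw [Finset.sum_pair (by norm_num : (0:ℕ) ≠ 1)]
          dsimp [C]
  · exact h.1 ⟨({0, 1} : Finset ℕ), by
      rw [Finset.sum_pair (by norm_num : (0:ℕ) ≠ 1)]; dsimp [C]⟩

lemma obs_biUnion (hx : IsObservable u n x) {ι : Type*} [DecidableEq ι]
    (C : ι → Set (Fin n → ℝ)) (hmeas : ∀ i, MeasurableSet (C i)) (F : Finset ι)
    (hdisj : ∀ i ∈ F, ∀ j ∈ F, i ≠ j → Disjoint (C i) (C j)) :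
    x (⋃ i ∈ F, C i) = ∑ i ∈ F, x (C i) := by
  classical
  induction F using Finset.induction_on with
  | empty => simpa using obs_empty hx
  | insert c s ha ih =>
    have hU : MeasurableSet (⋃ i ∈ s, C i) :=
      s.measurableSet_biUnion (fun i _ => hmeas i)
    have hdis : Disjoint (C c) (⋃ i ∈ s, C i) := by
      rw [Set.disjoint_iUnion₂_right]
      intro i hi
      exact hdisj c (Finset.mem_insert_self c s) i (Finset.mem_insert_of_mem hi)
        (fun h => ha (h ▸ hi))
    have hdisj' : ∀ i ∈ s, ∀ j ∈ s, i ≠ j → Disjoint (C i) (C j) := fun i hi j hj hij =>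
      hdisj i (Finset.mem_insert_of_mem hi) j (Finset.mem_insert_of_mem hj) hij
    rw [Finset.set_biUnion_insert, obs_union hx (hmeas c) hU hdis,
      Finset.sum_insert ha, ih hdisj']

lemma neg_one_pow_powerset_sum {α : Type*} [DecidableEq α] (K : Finset α) :
    ∑ R ∈ K.powerset, (-1 : ℤ) ^ (K.card - R.card) = if K = ∅ then 1 else 0 := by
  have key : ∀ R ∈ K.powerset, (-1 : ℤ) ^ (K.card - R.card) = (-1) ^ K.card * (-1) ^ R.card := by
    intro R hR
    have hc : R.card ≤ K.card := Finset.card_le_card (Finset.mem_powerset.mp hR)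
    have h2 : K.card + R.card = (K.card - R.card) + 2 * R.card := by omega
    rw [← pow_add, h2, pow_add, pow_mul]
    norm_num
  rw [Finset.sum_congr rfl key, ← Finset.mul_sum, Finset.sum_powerset_neg_one_pow_card]
  split_ifs with h
  · simp [h]
  · ring

lemma coeff_sum {α : Type*} [DecidableEq α] (J T : Finset α) (hT : T ⊆ J) :
    ∑ S ∈ J.powerset.filter (fun S => T ⊆ S), (-1 : ℤ) ^ (J.card - S.card)
      = if T = J then 1 else 0 := by
  have hbij : ∑ S ∈ J.powerset.filter (fun S => T ⊆ S), (-1 : ℤ) ^ (J.card - S.card)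
      = ∑ R ∈ (J \ T).powerset, (-1 : ℤ) ^ ((J \ T).card - R.card) := by
    refine Finset.sum_nbij' (fun S => S \ T) (fun R => R ∪ T) ?_ ?_ ?_ ?_ ?_
    · intro S hS
      obtain ⟨hSJ, hTS⟩ := Finset.mem_filter.mp hS
      exact Finset.mem_powerset.mpr
        (Finset.sdiff_subset_sdiff (Finset.mem_powerset.mp hSJ) le_rfl)
    · intro R hR
      have hR' := Finset.mem_powerset.mp hR
      refine Finset.mem_filter.mpr ⟨Finset.mem_powerset.mpr ?_, Finset.subset_union_right⟩
      exact Finset.union_subset (hR'.trans (Finset.sdiff_subset)) hT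
    · intro S hS
      exact Finset.sdiff_union_of_subset (Finset.mem_filter.mp hS).2
    · intro R hR
      have hR' := Finset.mem_powerset.mp hR
      exact Finset.union_sdiff_cancel_right
        (Finset.disjoint_left.mpr fun a ha => (Finset.mem_sdiff.mp (hR' ha)).2)
    · intro S hS
      obtain ⟨hSJ, hTS⟩ := Finset.mem_filter.mp hS
      have hSJ' := Finset.mem_powerset.mp hSJ
      congr 1
      rw [Finset.card_sdiff_of_subset hT, Finset.card_sdiff_of_subset hTS]
      have := Finset.card_le_card hSJ'
      have := Finset.card_le_card hTS
      omega
  rw [hbij, neg_one_pow_powerset_sum]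
  by_cases h : T = J
  · rw [if_pos h, if_pos (by rw [h, Finset.sdiff_self])]
  · rw [if_neg h, if_neg
      (fun he => h (subset_antisymm hT (Finset.sdiff_eq_empty_iff_subset.mp he)))]

end AuxLemmas


theorem stmt_6 {H G : Type*} [AddCommGroup H] [LinearOrder H] [IsOrderedAddMonoid H]
    [AddCommGroup G] [Lattice G] [CovariantClass G G (· + ·) (· ≤ ·)]
    (hG : DedekindSigmaComplete G) (u : H) (hu : IsStrongUnit u)
    (n : ℕ) (hn : 1 ≤ n) (x : Set (Fin n → ℝ) → H ×ₗ G)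
    (hx : IsObservable u n x)
    (J : Finset (Fin n)) (hJne : J.Nonempty) (hJpr : J ≠ Finset.univ)
    (a b s : Fin n → ℝ) (hab : ∀ j ∈ J, a j ≤ b j) :
    toLex ((0 : H), (0 : G)) ≤
      ∑ S ∈ J.powerset, ((-1 : ℤ) ^ (J.card - S.card)) •
        specRes x (fun j => if j ∈ S then b j else if j ∈ J then a j else s j) := by

  classical
  set B : Finset (Fin n) → Set (Fin n → ℝ) := fun T =>
    {t | ∀ i, t i ∈ (if i ∈ T then Set.Ico (a i) (b i)
      else if i ∈ J then Set.Iio (a i) else Set.Iio (s i))} with hBdef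
  have hBmeas : ∀ T, MeasurableSet (B T) := by
    intro T
    have hrw : B T = ⋂ i : Fin n, (fun t : Fin n → ℝ => t i) ⁻¹'
        (if i ∈ T then Set.Ico (a i) (b i)
          else if i ∈ J then Set.Iio (a i) else Set.Iio (s i)) := by
      ext t; simp [hBdef, Set.mem_iInter]
    rw [hrw]
    refine MeasurableSet.iInter fun i => measurable_pi_apply i ?_
    split_ifs
    · exact measurableSet_Ico
    · exact measurableSet_Iio
    · exact measurableSet_Iio
  have key : ∀ T T' : Finset (Fin n), T ⊆ J → (∃ j, j ∈ T ∧ j ∉ T') →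
      Disjoint (B T) (B T') := by
    rintro T T' hTJ ⟨j, hjT, hjT'⟩
    rw [Set.disjoint_left]
    intro t ht ht'
    simp only [hBdef, Set.mem_setOf_eq] at ht ht'
    have h1 := ht j
    have h2 := ht' j
    rw [if_pos hjT] at h1
    rw [if_neg hjT', if_pos (hTJ hjT)] at h2
    exact absurd h1.1 (not_le.mpr h2)
  have hBdisj : ∀ T, T ⊆ J → ∀ T', T' ⊆ J → T ≠ T' → Disjoint (B T) (B T') := by
    intro T hT T' hT' hne
    by_cases h : T ⊆ T'
    · have h' : ¬ T' ⊆ T := fun h' => hne (subset_antisymm h h')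
      exact (key T' T hT' (Finset.not_subset.mp h')).symm
    · exact key T T' hT (Finset.not_subset.mp h)
  have hdecomp : ∀ S ∈ J.powerset,
      specRes x (fun j => if j ∈ S then b j else if j ∈ J then a j else s j)
        = ∑ T ∈ S.powerset, x (B T) := by
    intro S hS
    have hSJ := Finset.mem_powerset.mp hS
    have hset : {t : Fin n → ℝ |
        ∀ i, t i < (fun j => if j ∈ S then b j else if j ∈ J then a j else s j) i}
        = ⋃ T ∈ S.powerset, B T := by
      ext t
      simp only [Set.mem_setOf_eq, Set.mem_iUnion, hBdef, Finset.mem_powerset,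
        exists_prop]
      constructor
      · intro ht
        refine ⟨S.filter (fun j => a j ≤ t j), Finset.filter_subset _ _, ?_⟩
        intro i
        by_cases hiT : i ∈ S.filter (fun j => a j ≤ t j)
        · rw [if_pos hiT]
          have hmem := Finset.mem_filter.mp hiT
          have hlt := ht i
          rw [if_pos hmem.1] at hlt
          exact ⟨hmem.2, hlt⟩
        · rw [if_neg hiT]
          by_cases hiJ : i ∈ J
          · rw [if_pos hiJ]
            by_cases hiS : i ∈ S
            · have hna : ¬ a i ≤ t i := fun hle => hiT (Finset.mem_filter.mpr ⟨hiS, hle⟩)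
              exact lt_of_not_ge hna
            · have hlt := ht i
              rw [if_neg hiS, if_pos hiJ] at hlt
              exact hlt
          · rw [if_neg hiJ]
            have hiS : i ∉ S := fun h => hiJ (hSJ h)
            have hlt := ht i
            rw [if_neg hiS, if_neg hiJ] at hlt
            exact hlt
      · rintro ⟨T, hTS, ht⟩
        intro i
        have hi := ht i
        by_cases hiS : i ∈ S
        · rw [if_pos hiS]
          by_cases hiT : i ∈ T
          · rw [if_pos hiT] at hi
            exact hi.2
          · rw [if_neg hiT, if_pos (hSJ hiS)] at hi
            exact lt_of_lt_of_le hi (hab i (hSJ hiS))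
        · have hiT : i ∉ T := fun h => hiS (hTS h)
          rw [if_neg hiT] at hi
          rw [if_neg hiS]
          by_cases hiJ : i ∈ J
          · rw [if_pos hiJ] at hi ⊢
            exact hi
          · rw [if_neg hiJ] at hi ⊢
            exact hi
    show x _ = _
    rw [hset]
    exact obs_biUnion hx B hBmeas S.powerset (fun T hT T' hT' hne =>
      hBdisj T ((Finset.mem_powerset.mp hT).trans hSJ) T'
        ((Finset.mem_powerset.mp hT').trans hSJ) hne)
  have hrw : ∑ S ∈ J.powerset, ((-1 : ℤ) ^ (J.card - S.card)) •
        specRes x (fun j => if j ∈ S then b j else if j ∈ J then a j else s j)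
      = x (B J) := by
    calc ∑ S ∈ J.powerset, ((-1 : ℤ) ^ (J.card - S.card)) •
          specRes x (fun j => if j ∈ S then b j else if j ∈ J then a j else s j)
        = ∑ S ∈ J.powerset, ∑ T ∈ S.powerset,
            ((-1 : ℤ) ^ (J.card - S.card)) • x (B T) := by
          refine Finset.sum_congr rfl fun S hS => ?_
          rw [hdecomp S hS]; exact Finset.smul_sum
      _ = ∑ T ∈ J.powerset, ∑ S ∈ J.powerset.filter (fun S => T ⊆ S),
            ((-1 : ℤ) ^ (J.card - S.card)) • x (B T) := by
          refine Finset.sum_comm' ?_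
          intro S T
          simp only [Finset.mem_powerset, Finset.mem_filter]
          constructor
          · rintro ⟨h1, h2⟩; exact ⟨⟨h1, h2⟩, h2.trans h1⟩
          · rintro ⟨⟨h1, h2⟩, h3⟩; exact ⟨h1, h2⟩
      _ = ∑ T ∈ J.powerset,
            (∑ S ∈ J.powerset.filter (fun S => T ⊆ S), (-1 : ℤ) ^ (J.card - S.card))
              • x (B T) := by
          refine Finset.sum_congr rfl fun T hT => ?_
          rw [Finset.sum_smul]
      _ = ∑ T ∈ J.powerset, (if T = J then x (B T) else 0) := by
          refine Finset.sum_congr rfl fun T hT => ?_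
          rw [coeff_sum J T (Finset.mem_powerset.mp hT)]
          split_ifs <;> simp
      _ = x (B J) := by
          rw [Finset.sum_ite_eq' J.powerset J (fun T => x (B T)),
            if_pos (Finset.mem_powerset.mpr (Finset.Subset.refl J))]
  rw [hrw, ← lex_zero_eq]
  exact obs_nonneg hx (hBmeas J)
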